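/- Let A = ℚ + (X²−2)·ℚ[X] ⊆ B = ℚ[X]. Then no power of X+1 is an associate in B of an element of A; hence B is not almost well-centered on A. -/
import Mathlib

lemma sqrt2_pow_aux : ∀ n : ℕ, 0 < n → ∃ a b : ℚ, 0 < a ∧ 0 < b ∧
    (Real.sqrt 2 + 1) ^ n = (a : ℝ) + b * Real.sqrt 2 := by
  intro n hn
  induction n with
  | zero => omega
  | succ m ih =>
    rcases Nat.eq_zero_or_pos m with hm | hm
    · subst hm
      exact ⟨1, 1, one_pos, one_pos, by push_cast; ring⟩
    · obtain ⟨a, b, ha, hb, h⟩ := ih hm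
      refine ⟨a + 2 * b, a + b, by positivity, by positivity, ?_⟩
      have h2 : Real.sqrt 2 * Real.sqrt 2 = 2 :=
        Real.mul_self_sqrt (by norm_num)
      rw [pow_succ, h]
      push_cast
      linear_combination (b : ℝ) * h2

open Polynomial in
theorem stmt13 :
    ¬ ∃ (n : ℕ), 0 < n ∧ ∃ (u : (Polynomial ℚ)ˣ) (q : ℚ) (r : Polynomial ℚ),
      (u : Polynomial ℚ) * (X + 1) ^ n = C q + (X ^ 2 - 2) * r := by
  rintro ⟨n, hn, u, q, r, h⟩
  obtain ⟨c, hcu, hc⟩ := Polynomial.isUnit_iff.mp u.isUnit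
  have hc0 : c ≠ 0 := hcu.ne_zero
  have h2 : (Real.sqrt 2) ^ 2 = 2 := Real.sq_sqrt (by norm_num)
  have := congrArg (Polynomial.aeval (Real.sqrt 2)) h
  rw [← hc] at this
  simp only [map_mul, map_add, map_pow, map_sub, Polynomial.aeval_X,
    Polynomial.aeval_C, Polynomial.aeval_one, map_one, map_ofNat] at this
  rw [h2] at this
  simp only [sub_self, zero_mul, add_zero] at this
  -- this : c * (√2 + 1)^n = q
  obtain ⟨a, b, ha, hb, hab⟩ := sqrt2_pow_aux n hn
  rw [hab] at this
  simp only [eq_ratCast] at this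
  have hsqrt : Real.sqrt 2 = ((q / c - a) / b : ℚ) := by
    have hcb : (c : ℝ) ≠ 0 := by exact_mod_cast hc0
    have hbb : (b : ℝ) ≠ 0 := by positivity
    push_cast
    field_simp
    nlinarith [this]
  exact irrational_sqrt_two ⟨_, hsqrt.symm⟩
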